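/- With notation as in the elementary abelian setting (q = p^n, ramification invariants Φ(1), ..., Φ(r) coprime to p, m ≥ 1), the Boseck invariants Γ_k(m) = Σ_{i=1}^r ⌊(m(p^n−1)(Φ(i)+1) − kΦ(i))/p^n⌋ satisfy (2/(2m−1)) Σ_{k=0}^{p^n−1} Γ_k(m) = Σ_{i=1}^r (p^n − 1)(Φ(i) + 1), i.e. twice the sum of all Boseck invariants divided by 2m−1 equals the degree of the different. -/

import Mathlib

/-- Reindex a sum over `range q` as a sum over `ZMod q`. -/
lemma sum_range_eq_sum_zmod (q : ℕ) [NeZero q] (f : ℕ → ℤ) :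
    ∑ k ∈ Finset.range q, f k = ∑ x : ZMod q, f x.val := by
  refine Finset.sum_nbij' (fun k => (k : ZMod q)) (fun x => x.val) ?_ ?_ ?_ ?_ ?_
  · intro a _; exact Finset.mem_univ _
  · intro x _; exact Finset.mem_range.2 (ZMod.val_lt x)
  · intro a ha; exact ZMod.val_cast_of_lt (Finset.mem_range.1 ha)
  · intro x _; simp [ZMod.natCast_val, ZMod.cast_id]
  · intro a ha; rw [ZMod.val_cast_of_lt (Finset.mem_range.1 ha)]

/-- The residues `(A - k*c) % q` for `k < q` are a permutation of `0, …, q-1`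
when `c` is coprime to `q`. -/
lemma sum_emod (q : ℕ) (hq : 0 < q) (c : ℕ) (hc : Nat.Coprime c q) (A : ℤ) :
    ∑ k ∈ Finset.range q, (A - (k : ℤ) * (c : ℤ)) % (q : ℤ)
      = ∑ k ∈ Finset.range q, (k : ℤ) := by
  haveI : NeZero q := ⟨hq.ne'⟩
  have h1 : ∑ k ∈ Finset.range q, (A - (k : ℤ) * (c : ℤ)) % (q : ℤ)
      = ∑ x : ZMod q, ((((A : ZMod q) - x * (c : ℕ)).val : ℤ)) := by
    rw [sum_range_eq_sum_zmod q (fun k => (A - (k : ℤ) * (c : ℤ)) % (q : ℤ))]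
    refine Finset.sum_congr rfl fun x _ => ?_
    rw [← ZMod.val_intCast (n := q) (A - (x.val : ℤ) * (c : ℤ))]
    congr 2
    push_cast
    simp [ZMod.natCast_val, ZMod.cast_id]
  have h2 : ∑ x : ZMod q, ((((A : ZMod q) - x * (c : ℕ)).val : ℤ))
      = ∑ x : ZMod q, ((x.val : ℤ)) := by
    have := Equiv.sum_comp
      (((ZMod.unitOfCoprime c hc).mulLeft).trans (Equiv.subLeft (A : ZMod q)))
      (fun y : ZMod q => (y.val : ℤ))
    rw [← this]
    refine Finset.sum_congr rfl fun x _ => ?_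
    simp [Units.mulLeft, Equiv.subLeft, ZMod.coe_unitOfCoprime, mul_comm]
  have h3 : ∑ x : ZMod q, ((x.val : ℤ)) = ∑ k ∈ Finset.range q, (k : ℤ) :=
    (sum_range_eq_sum_zmod q (fun k => (k : ℤ))).symm
  rw [h1, h2, h3]

/-- Twice the Gauss sum in `ℤ`. -/
lemma two_mul_sum_range (q : ℕ) (hq : 0 < q) :
    2 * ∑ k ∈ Finset.range q, (k : ℤ) = (q : ℤ) * ((q : ℤ) - 1) := by
  have := Finset.sum_range_id_mul_two q
  have h : ((∑ i ∈ Finset.range q, i) * 2 : ℤ) = ((q * (q - 1) : ℕ) : ℤ) := by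
    exact_mod_cast congrArg (Nat.cast : ℕ → ℤ) this
  push_cast [Nat.cast_sub hq] at h
  linarith

/-- Key single-index computation. -/
lemma key_sum (q : ℕ) (hq : 0 < q) (c : ℕ) (hc : Nat.Coprime c q) (A : ℤ) :
    2 * ∑ k ∈ Finset.range q, ⌊((A - (k : ℤ) * (c : ℤ) : ℤ) : ℚ) / (q : ℚ)⌋
      = 2 * A - ((q : ℤ) - 1) * ((c : ℤ) + 1) := by
  have hfloor : ∀ k : ℕ, ⌊((A - (k : ℤ) * (c : ℤ) : ℤ) : ℚ) / (q : ℚ)⌋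
      = (A - (k : ℤ) * (c : ℤ)) / (q : ℤ) := fun k =>
    Rat.floor_intCast_div_natCast _ q
  have hint : ∀ a : ℤ, (q : ℤ) * (a / (q : ℤ)) = a - a % (q : ℤ) := fun a => by
    have := Int.mul_ediv_add_emod a (q : ℤ); linarith
  have hqZ : (0 : ℤ) < (q : ℤ) := by exact_mod_cast hq
  apply mul_left_cancel₀ hqZ.ne'
  calc (q : ℤ) * (2 * ∑ k ∈ Finset.range q,
          ⌊((A - (k : ℤ) * (c : ℤ) : ℤ) : ℚ) / (q : ℚ)⌋)
      = 2 * ∑ k ∈ Finset.range q, (q : ℤ) * ((A - (k : ℤ) * (c : ℤ)) / (q : ℤ)) := by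
        simp_rw [hfloor]; rw [mul_left_comm, Finset.mul_sum]
    _ = 2 * ∑ k ∈ Finset.range q,
          ((A - (k : ℤ) * (c : ℤ)) - (A - (k : ℤ) * (c : ℤ)) % (q : ℤ)) := by
        simp_rw [hint]
    _ = 2 * ((∑ k ∈ Finset.range q, (A - (k : ℤ) * (c : ℤ)))
          - ∑ k ∈ Finset.range q, (k : ℤ)) := by
        rw [Finset.sum_sub_distrib, sum_emod q hq c hc A]
    _ = 2 * ((q : ℤ) * A - (c : ℤ) * ∑ k ∈ Finset.range q, (k : ℤ)
          - ∑ k ∈ Finset.range q, (k : ℤ)) := by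
        have hsum : ∑ k ∈ Finset.range q, (A - (k : ℤ) * (c : ℤ))
            = (q : ℤ) * A - (c : ℤ) * ∑ k ∈ Finset.range q, (k : ℤ) := by
          rw [Finset.sum_sub_distrib, Finset.sum_const, Finset.card_range,
            nsmul_eq_mul, Finset.mul_sum]
          simp_rw [mul_comm (c : ℤ)]
        rw [hsum]
    _ = (q : ℤ) * (2 * A) - ((c : ℤ) + 1) * (2 * ∑ k ∈ Finset.range q, (k : ℤ)) := by
        ring
    _ = (q : ℤ) * (2 * A - ((q : ℤ) - 1) * ((c : ℤ) + 1)) := by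
        rw [two_mul_sum_range q hq]; ring

/-- Boseck invariants in the elementary abelian setting:
`Γ_k(m) = Σ_{i=1}^r ⌊(m(p^n-1)(Φ(i)+1) - kΦ(i))/p^n⌋` satisfy
`(2/(2m-1)) Σ_{k=0}^{p^n-1} Γ_k(m) = Σ_{i=1}^r (p^n-1)(Φ(i)+1) = deg Diff(F/K(x))`,
stated here with both sides multiplied by `2m-1`. -/
theorem boseck_sum_eq_deg_different
    (p n r m : ℕ) (hp : p.Prime) (hn : 1 ≤ n) (hr : 1 ≤ r) (hm : 1 ≤ m)
    (Φ : Fin r → ℕ) (hΦpos : ∀ i, 1 ≤ Φ i) (hΦcop : ∀ i, Nat.Coprime (Φ i) p) :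
    2 * ∑ k ∈ Finset.range (p ^ n), ∑ i,
        ⌊(((m : ℤ) * ((p : ℤ) ^ n - 1) * ((Φ i : ℤ) + 1) - (k : ℤ) * (Φ i : ℤ) : ℤ) : ℚ)
          / (p : ℚ) ^ n⌋
      = (2 * (m : ℤ) - 1) * ∑ i, ((p : ℤ) ^ n - 1) * ((Φ i : ℤ) + 1) := by
  have hq : 0 < p ^ n := pow_pos hp.pos n
  rw [Finset.sum_comm, Finset.mul_sum, Finset.mul_sum]
  refine Finset.sum_congr rfl fun i _ => ?_
  have hcop : Nat.Coprime (Φ i) (p ^ n) := (hΦcop i).pow_right n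
  have := key_sum (p ^ n) hq (Φ i) hcop
    ((m : ℤ) * ((p : ℤ) ^ n - 1) * ((Φ i : ℤ) + 1))
  have hcast : ((p ^ n : ℕ) : ℚ) = (p : ℚ) ^ n := by push_cast; ring
  have hcastZ : ((p ^ n : ℕ) : ℤ) = (p : ℤ) ^ n := by push_cast; ring
  rw [hcast, hcastZ] at this
  rw [this]
  ring
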